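/- Let F be a Pythagorean, formally real *-sfield and n ≥ 1. Then F^n, equipped with the standard form ((α₁,…,αₙ),(β₁,…,βₙ)) = α₁β₁⋆ + … + αₙβₙ⋆, is an anisotropic Hermitian space, and it is transitive: for any nonzero u, v ∈ F^n there is a unitary operator U with U(u) ∈ span{v}. -/

import Mathlib

namespace Stmt11Aux

variable {F : Type*} [DivisionRing F] [StarRing F] {n : ℕ}

def gd (u v : Fin n → F) : F := ∑ i, u i * star (v i)

lemma gd_star (u v : Fin n → F) : gd u v = star (gd v u) := by
  simp [gd, star_sum, star_mul]

lemma gd_add_left (x y z : Fin n → F) : gd (x + y) z = gd x z + gd y z := by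
  simp [gd, add_mul, Finset.sum_add_distrib]

lemma gd_sub_left (x y z : Fin n → F) : gd (x - y) z = gd x z - gd y z := by
  simp [gd, sub_mul, Finset.sum_sub_distrib]

lemma gd_smul_left (a : F) (x y : Fin n → F) : gd (a • x) y = a * gd x y := by
  simp [gd, Finset.mul_sum, mul_assoc]

lemma gd_smul_right (a : F) (x y : Fin n → F) : gd x (a • y) = gd x y * star a := by
  simp [gd, Finset.sum_mul, star_mul, mul_assoc]

lemma gd_sum_left {ι : Type*} (s : Finset ι) (f : ι → Fin n → F) (y : Fin n → F) :
    gd (∑ i ∈ s, f i) y = ∑ i ∈ s, gd (f i) y := by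
  simp only [gd, Finset.sum_apply, Finset.sum_mul]
  exact Finset.sum_comm

/-- iterated Pythagorean property -/
lemma sum_sq (hPyth : ∀ α β : F, ∃ γ : F, α * star α + β * star β = γ * star γ) :
    ∀ (k : ℕ) (a : Fin k → F), ∃ γ : F, ∑ i, a i * star (a i) = γ * star γ := by
  intro k
  induction k with
  | zero => exact fun a => ⟨0, by simp⟩
  | succ k ih =>
    intro a
    obtain ⟨δ, hδ⟩ := ih (fun i => a i.succ)
    obtain ⟨γ, hγ⟩ := hPyth (a 0) δ
    exact ⟨γ, by rw [Fin.sum_univ_succ, hδ, hγ]⟩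

variable (hPyth : ∀ α β : F, ∃ γ : F, α * star α + β * star β = γ * star γ)
variable (hFR : ∀ (k : ℕ) (a : Fin k → F), (∑ i, a i * star (a i)) = 0 → ∀ i, a i = 0)

include hFR in
lemma aniso (x : Fin n → F) (h : gd x x = 0) : x = 0 :=
  funext fun i => hFR n x h i

include hPyth hFR in
/-- nonzero vectors have gd x x = γ γ* with γ ≠ 0 -/
lemma norm_ne (x : Fin n → F) (hx : x ≠ 0) :
    ∃ γ : F, γ ≠ 0 ∧ gd x x = γ * star γ := by
  obtain ⟨γ, hγ⟩ := sum_sq hPyth n x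
  refine ⟨γ, fun h0 => hx (aniso hFR x ?_), hγ⟩
  show (∑ i, x i * star (x i)) = 0
  rw [hγ, h0, star_zero, mul_zero]

def ON {k : ℕ} (p : Fin k → Fin n → F) : Prop :=
  ∀ i j, gd (p i) (p j) = if i = j then (1 : F) else 0

include hPyth hFR in
lemma extend {k : ℕ} (hk : k < n) (p : Fin k → Fin n → F) (hp : ON p) :
    ∃ w, ON (Fin.snoc p w) := by
  classical
  -- find a vector outside the span
  have hspan : ∃ w₀, w₀ ∉ Submodule.span F (Set.range p) := by
    have h := span_lt_top_of_card_lt_finrank (R := F) (s := Set.range p) ?_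
    · obtain ⟨w, -, hw⟩ := SetLike.exists_of_lt h
      exact ⟨w, hw⟩
    · calc (Set.range p).toFinset.card ≤ k := by
            rw [Set.toFinset_range]; exact (Finset.card_image_le).trans (by simp)
        _ < Module.finrank F (Fin n → F) := by simpa
  obtain ⟨w₀, hw₀⟩ := hspan
  set r : Fin n → F := w₀ - ∑ i, gd w₀ (p i) • p i with hr_def
  have hr_orth : ∀ j, gd r (p j) = 0 := by
    intro j
    rw [hr_def, gd_sub_left, gd_sum_left]
    have : ∀ i : Fin k, gd (gd w₀ (p i) • p i) (p j) = if i = j then gd w₀ (p j) else 0 := by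
      intro i
      rw [gd_smul_left, hp i j]
      split <;> rename_i h <;> simp [h]
    rw [Finset.sum_congr rfl fun i _ => this i]
    simp
  have hr_ne : r ≠ 0 := by
    intro h0
    apply hw₀
    have : w₀ = ∑ i, gd w₀ (p i) • p i := by
      have := sub_eq_zero.mp (hr_def ▸ h0)
      exact this
    rw [this]
    exact Submodule.sum_mem _ fun i _ =>
      Submodule.smul_mem _ _ (Submodule.subset_span ⟨i, rfl⟩)
  obtain ⟨γ, hγ0, hγ⟩ := norm_ne hPyth hFR r hr_ne
  refine ⟨γ⁻¹ • r, ?_⟩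
  have hsγ : star γ ≠ 0 := star_ne_zero.mpr hγ0
  have hww : gd (γ⁻¹ • r) (γ⁻¹ • r) = 1 := by
    rw [gd_smul_left, gd_smul_right, hγ, star_inv₀, ← mul_assoc, ← mul_assoc,
      inv_mul_cancel₀ hγ0, one_mul, mul_inv_cancel₀ hsγ]
  have hw_orth : ∀ j, gd (γ⁻¹ • r) (p j) = 0 := fun j => by
    rw [gd_smul_left, hr_orth, mul_zero]
  have hw_orth' : ∀ j, gd (p j) (γ⁻¹ • r) = 0 := fun j => by
    rw [gd_star, hw_orth, star_zero]
  intro i j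
  induction i using Fin.lastCases with
  | last =>
    induction j using Fin.lastCases with
    | last => simpa using hww
    | cast j =>
      rw [Fin.snoc_last, Fin.snoc_castSucc, hw_orth j]
      simp [(Fin.castSucc_lt_last j).ne']
  | cast i =>
    induction j using Fin.lastCases with
    | last =>
      rw [Fin.snoc_last, Fin.snoc_castSucc, hw_orth' i]
      simp [(Fin.castSucc_lt_last i).ne]
    | cast j =>
      rw [Fin.snoc_castSucc, Fin.snoc_castSucc, hp i j]
      simp [Fin.castSucc_inj]

include hPyth hFR in
lemma toBasis : ∀ (m k : ℕ) (hkm : k + m = n) (p : Fin k → Fin n → F), ON p →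
    ∃ q : Fin n → Fin n → F, ON q ∧
      ∀ i : Fin k, q (Fin.castLE (by omega) i) = p i := by
  intro m
  induction m with
  | zero =>
    intro k hkm p hp
    have hkn : k = n := by omega
    subst hkn
    exact ⟨p, hp, fun i => rfl⟩
  | succ m ih =>
    intro k hkm p hp
    have hk : k < n := by omega
    obtain ⟨w, hw⟩ := extend hPyth hFR hk p hp
    obtain ⟨q, hq, hqe⟩ := ih (k + 1) (by omega) (Fin.snoc p w) hw
    refine ⟨q, hq, fun i => ?_⟩
    have h := hqe (Fin.castSucc i)
    rw [Fin.snoc_castSucc] at h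
    exact h

lemma ON_li {k : ℕ} (q : Fin k → Fin n → F) (hq : ON q) : LinearIndependent F q := by
  rw [Fintype.linearIndependent_iff]
  intro c hc j
  have : gd (∑ i, c i • q i) (q j) = 0 := by rw [hc]; simp [gd]
  rw [gd_sum_left] at this
  have h2 : ∀ i : Fin k, gd (c i • q i) (q j) = if i = j then c j else 0 := by
    intro i
    rw [gd_smul_left, hq i j]
    split <;> rename_i h <;> simp [h]
  rw [Finset.sum_congr rfl fun i _ => h2 i] at this
  simpa using this

lemma parseval (hn : 1 ≤ n) (q : Fin n → Fin n → F) (hq : ON q) :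
    ∀ x y : Fin n → F, gd x y = ∑ i, gd x (q i) * gd (q i) y := by
  haveI : Nonempty (Fin n) := ⟨⟨0, hn⟩⟩
  have hspan : Submodule.span F (Set.range q) = ⊤ := by
    apply LinearIndependent.span_eq_top_of_card_eq_finrank (ON_li q hq)
    simp
  intro x y
  have hx : x ∈ Submodule.span F (Set.range q) := hspan ▸ Submodule.mem_top
  obtain ⟨c, hc⟩ := (Submodule.mem_span_range_iff_exists_fun F).mp hx
  have hcoef : ∀ j, gd x (q j) = c j := by
    intro j
    rw [← hc, gd_sum_left]
    have h2 : ∀ i : Fin n, gd (c i • q i) (q j) = if i = j then c j else 0 := by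
      intro i
      rw [gd_smul_left, hq i j]
      split <;> rename_i h <;> simp [h]
    rw [Finset.sum_congr rfl fun i _ => h2 i]
    simp
  calc gd x y = gd (∑ i, c i • q i) y := by rw [hc]
    _ = ∑ i, c i * gd (q i) y := by
        rw [gd_sum_left]; exact Finset.sum_congr rfl fun i _ => gd_smul_left _ _ _
    _ = ∑ i, gd x (q i) * gd (q i) y := by
        exact Finset.sum_congr rfl fun i _ => by rw [hcoef i]

include hPyth hFR in
/-- main reduction: any nonzero vector is mapped by a unitary equivalence
to a nonzero multiple of the first standard basis-like vector -/
lemma reduce (hn : 1 ≤ n) (u : Fin n → F) (hu : u ≠ 0) :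
    ∃ (W : (Fin n → F) ≃ₗ[F] (Fin n → F)) (γ : F), γ ≠ 0 ∧
      (∀ x y, gd (W x) (W y) = gd x y) ∧
      W u = γ • (fun i => if (⟨0, hn⟩ : Fin n) = i then (1 : F) else 0) := by
  classical
  obtain ⟨γ, hγ0, hγ⟩ := norm_ne hPyth hFR u hu
  have hp : ON (fun _ : Fin 1 => γ⁻¹ • u) := by
    intro i j
    have : gd (γ⁻¹ • u) (γ⁻¹ • u) = 1 := by
      rw [gd_smul_left, gd_smul_right, hγ, star_inv₀, ← mul_assoc, ← mul_assoc,
        inv_mul_cancel₀ hγ0, one_mul, mul_inv_cancel₀ (star_ne_zero.mpr hγ0)]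
    rw [this, if_pos (Subsingleton.elim i j)]
  obtain ⟨q, hq, hqe⟩ := toBasis hPyth hFR (n - 1) 1 (by omega) _ hp
  have hq0 : q ⟨0, hn⟩ = γ⁻¹ • u := by
    have := hqe 0
    convert this using 2
    rfl
  have hpar := parseval hn q hq
  -- the linear map
  set Wlin : (Fin n → F) →ₗ[F] (Fin n → F) :=
    { toFun := fun x => fun i => gd x (q i)
      map_add' := fun x y => funext fun i => gd_add_left x y (q i)
      map_smul' := fun a x => funext fun i => gd_smul_left a x (q i) } with hWlin
  have hWapp : ∀ x i, Wlin x i = gd x (q i) := fun x i => rfl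
  have hWiso : ∀ x y, gd (Wlin x) (Wlin y) = gd x y := by
    intro x y
    rw [hpar x y]
    show ∑ i, gd x (q i) * star (gd y (q i)) = _
    exact Finset.sum_congr rfl fun i _ => by rw [← gd_star]
  have hinj : Function.Injective Wlin := by
    rw [← LinearMap.ker_eq_bot, LinearMap.ker_eq_bot']
    intro x hx
    apply aniso hFR
    rw [← hWiso x x, hx]
    simp [gd]
  have hbij : Function.Bijective Wlin := ⟨hinj, LinearMap.injective_iff_surjective.mp hinj⟩
  refine ⟨LinearEquiv.ofBijective Wlin hbij, γ, hγ0, ?_, ?_⟩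
  · intro x y; exact hWiso x y
  · show Wlin u = _
    funext i
    rw [hWapp]
    have hu' : u = γ • q ⟨0, hn⟩ := by rw [hq0, smul_smul, mul_inv_cancel₀ hγ0, one_smul]
    rw [hu', gd_smul_left, hq ⟨0, hn⟩ i]
    simp

end Stmt11Aux

open Stmt11Aux in
/-- For a Pythagorean formally real ⋆-sfield `F` and `n ≥ 1`, the space `F^n` with the
standard inner product is an anisotropic Hermitian space and is transitive. -/
theorem stmt11 {F : Type*} [DivisionRing F] [StarRing F]
    (hPyth : ∀ α β : F, ∃ γ : F, α * star α + β * star β = γ * star γ)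
    (hFR : ∀ (k : ℕ) (a : Fin k → F), (∑ i, a i * star (a i)) = 0 → ∀ i, a i = 0)
    (n : ℕ) (hn : 1 ≤ n) :
    let g : (Fin n → F) → (Fin n → F) → F := fun u v => ∑ i, u i * star (v i)
    -- hermitian symmetry
    (∀ u v : Fin n → F, g u v = star (g v u)) ∧
    -- anisotropy
    (∀ u : Fin n → F, g u u = 0 → u = 0) ∧
    -- transitivity
    (∀ u v : Fin n → F, u ≠ 0 → v ≠ 0 →
      ∃ U : (Fin n → F) →ₗ[F] (Fin n → F), Function.Bijective U ∧
        (∀ x y : Fin n → F, g (U x) (U y) = g x y) ∧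
        U u ∈ Submodule.span F ({v} : Set (Fin n → F))) := by
  intro g
  have hg : ∀ u v : Fin n → F, g u v = gd u v := fun _ _ => rfl
  refine ⟨fun u v => gd_star u v, fun u h => aniso hFR u h, ?_⟩
  intro u v hu hv
  obtain ⟨Wu, γu, hγu, hWu_iso, hWu⟩ := reduce hPyth hFR hn u hu
  obtain ⟨Wv, γv, hγv, hWv_iso, hWv⟩ := reduce hPyth hFR hn v hv
  refine ⟨Wv.symm.toLinearMap ∘ₗ Wu.toLinearMap, ?_, ?_, ?_⟩
  · exact (Wv.symm.bijective).comp Wu.bijective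
  · intro x y
    show gd (Wv.symm (Wu x)) (Wv.symm (Wu y)) = gd x y
    rw [← hWu_iso x y]
    have := hWv_iso (Wv.symm (Wu x)) (Wv.symm (Wu y))
    rw [Wv.apply_symm_apply, Wv.apply_symm_apply] at this
    exact this.symm
  · show Wv.symm (Wu u) ∈ _
    have he : Wv.symm (γv • (fun i => if (⟨0, hn⟩ : Fin n) = i then (1 : F) else 0)) = v := by
      rw [← hWv, Wv.symm_apply_apply]
    have he2 : Wv.symm (fun i => if (⟨0, hn⟩ : Fin n) = i then (1 : F) else 0) = γv⁻¹ • v := by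
      rw [← he, map_smul, smul_smul, inv_mul_cancel₀ hγv, one_smul]
    rw [hWu, map_smul, he2, smul_smul]
    exact Submodule.mem_span_singleton.mpr ⟨γu * γv⁻¹, rfl⟩
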